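/- Let A = F[x_1, ..., x_n]/(x_1², ..., x_n²) over a field F of characteristic 0, with grading A = ⊕_{k=0}^n A_k where A_k is spanned by square-free monomials of degree k, and let l = x_1 + ... + x_n. Then for all 0 ≤ k ≤ ⌊n/2⌋, the multiplication map ×l^(n-2k) : A_k → A_{n-k} is bijective. -/

import Mathlib

/-- The quadratic monomial complete intersection `F[x_1,…,x_n]/(x_1²,…,x_n²)`. -/
def SquareFreeAlgebra (F : Type*) [Field F] (n : ℕ) :=
  MvPolynomial (Fin n) F ⧸
    Ideal.span (Set.range fun i : Fin n => (MvPolynomial.X i : MvPolynomial (Fin n) F) ^ 2)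

noncomputable instance (F : Type*) [Field F] (n : ℕ) : CommRing (SquareFreeAlgebra F n) :=
  Ideal.Quotient.commRing _

noncomputable instance (F : Type*) [Field F] (n : ℕ) : Algebra F (SquareFreeAlgebra F n) :=
  Ideal.Quotient.algebra F

/-- The image of the variable `x i` in `F[x_1,…,x_n]/(x_1²,…,x_n²)`. -/
noncomputable def sfVar {F : Type*} [Field F] {n : ℕ} (i : Fin n) : SquareFreeAlgebra F n :=
  Ideal.Quotient.mk _ (MvPolynomial.X i)

/-- The degree-`k` homogeneous component `A_k` of `A = F[x_1,…,x_n]/(x_1²,…,x_n²)`: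
the span of the square-free monomials of degree `k`. -/
noncomputable def sfGrade (F : Type*) [Field F] (n k : ℕ) :
    Submodule F (SquareFreeAlgebra F n) :=
  Submodule.span F ((fun s : Finset (Fin n) => ∏ i ∈ s, sfVar i) '' {s | s.card = k})

namespace SFLef

open MvPolynomial

variable {F : Type*} [Field F] {n : ℕ}

/-- The defining ideal. -/
noncomputable def Idl (F : Type*) [Field F] (n : ℕ) : Ideal (MvPolynomial (Fin n) F) :=
  Ideal.span (Set.range fun i : Fin n => (MvPolynomial.X i : MvPolynomial (Fin n) F) ^ 2)

/-- The quotient map as an `F`-algebra hom. -/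
noncomputable def mkQ (F : Type*) [Field F] (n : ℕ) :
    MvPolynomial (Fin n) F →ₐ[F] SquareFreeAlgebra F n :=
  Ideal.Quotient.mkₐ F (Idl F n)

lemma sfVar_eq (i : Fin n) : (sfVar i : SquareFreeAlgebra F n) = mkQ F n (X i) := rfl

/-- Square-free monomial indexed by a finite set. -/
noncomputable def E (F : Type*) [Field F] {n : ℕ} (s : Finset (Fin n)) :
    SquareFreeAlgebra F n :=
  ∏ i ∈ s, sfVar i

lemma sfVar_sq (i : Fin n) : (sfVar i : SquareFreeAlgebra F n) * sfVar i = 0 := by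
  rw [sfVar_eq, ← map_mul, ← sq]
  rw [show (mkQ F n) (X i ^ 2) = Ideal.Quotient.mk (Idl F n) (X i ^ 2) from rfl,
    ]
  exact Ideal.Quotient.eq_zero_iff_mem.mpr (Ideal.subset_span ⟨i, rfl⟩)

lemma mul_E_of_not_mem {s : Finset (Fin n)} {i : Fin n} (hi : i ∉ s) :
    sfVar i * E F s = E F (insert i s) :=
  (Finset.prod_insert hi).symm

lemma mul_E_of_mem {s : Finset (Fin n)} {i : Fin n} (hi : i ∈ s) :
    sfVar i * E F s = 0 := by
  rw [E, ← Finset.mul_prod_erase s _ hi, ← mul_assoc, sfVar_sq, zero_mul]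

lemma l_mul_E (s : Finset (Fin n)) :
    (∑ i : Fin n, sfVar i) * E F s = ∑ i ∈ sᶜ, E F (insert i s) := by
  erw [Finset.sum_mul]; rw [← Finset.sum_add_sum_compl s fun i => sfVar i * E F s]
  erw [Finset.sum_congr rfl fun i hi => mul_E_of_mem hi, Finset.sum_const, smul_zero, zero_add]
  exact Finset.sum_congr rfl fun i hi => mul_E_of_not_mem (Finset.mem_compl.mp hi)

/-- The comparison linear map from functions on subsets to the algebra. -/
noncomputable def sig (F : Type*) [Field F] (n : ℕ) :
    (Finset (Fin n) → F) →ₗ[F] SquareFreeAlgebra F n where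
  toFun f := ∑ s : Finset (Fin n), f s • E F s
  map_add' f g := by simp [add_smul, Finset.sum_add_distrib]
  map_smul' c f := by simp [mul_smul, Finset.smul_sum]

end SFLef

namespace SFLef

variable {F : Type*} [Field F] {n : ℕ}
open MvPolynomial

/-- Intertwining: multiplication by `l` corresponds to the up operator. -/
lemma sig_up (f : Finset (Fin n) → F) :
    (∑ i : Fin n, sfVar i) * sig F n f
      = sig F n (fun t => ∑ j ∈ t, f (t.erase j)) := by
  show (∑ i : Fin n, sfVar i) * ∑ s : Finset (Fin n), f s • E F s = _
  erw [Finset.mul_sum]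
  have h1 : ∀ s : Finset (Fin n),
      (∑ i : Fin n, sfVar i) * (f s • E F s) = ∑ i ∈ sᶜ, f s • E F (insert i s) := by
    intro s
    rw [mul_smul_comm, l_mul_E, Finset.smul_sum]
  erw [Finset.sum_congr rfl fun s _ => h1 s]
  show _ = ∑ t : Finset (Fin n), (∑ j ∈ t, f (t.erase j)) • E F t
  have h2 : ∀ t : Finset (Fin n),
      (∑ j ∈ t, f (t.erase j)) • E F t = ∑ j ∈ t, f (t.erase j) • E F t := by
    intro t; rw [Finset.sum_smul]
  rw [Finset.sum_congr rfl fun t _ => h2 t]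
  rw [Finset.sum_sigma' Finset.univ (fun s => sᶜ) (fun s i => f s • E F (insert i s)),
    Finset.sum_sigma' Finset.univ (fun t => t) (fun t j => f (t.erase j) • E F t)]
  refine Finset.sum_bij' (fun p _ => ⟨insert p.2 p.1, p.2⟩)
    (fun p _ => ⟨p.1.erase p.2, p.2⟩) ?_ ?_ ?_ ?_ ?_
  · rintro ⟨s, i⟩ hp
    simp only [Finset.mem_sigma, Finset.mem_univ, true_and] at hp ⊢
    exact Finset.mem_insert_self _ _
  · rintro ⟨t, j⟩ hp
    simp only [Finset.mem_sigma, Finset.mem_univ, true_and] at hp ⊢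
    simp [Finset.mem_compl]
  · rintro ⟨s, i⟩ hp
    simp only [Finset.mem_sigma, Finset.mem_univ, true_and] at hp
    have hi : i ∉ s := Finset.mem_compl.mp hp
    simp [Finset.erase_insert hi]
  · rintro ⟨t, j⟩ hp
    simp only [Finset.mem_sigma, Finset.mem_univ, true_and] at hp
    simp [Finset.insert_erase hp]
  · rintro ⟨s, i⟩ hp
    simp only [Finset.mem_sigma, Finset.mem_univ, true_and] at hp
    have hi : i ∉ s := Finset.mem_compl.mp hp
    simp [Finset.erase_insert hi]

end SFLef

namespace SFLef

variable {F : Type*} [Field F] {n : ℕ}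
open MvPolynomial

/-- The square-free exponent vector of a finite set. -/
noncomputable def ex (s : Finset (Fin n)) : Fin n →₀ ℕ :=
  ∑ i ∈ s, Finsupp.single i 1

lemma ex_apply (s : Finset (Fin n)) (j : Fin n) :
    ex s j = if j ∈ s then 1 else 0 := by
  classical
  rw [ex, Finsupp.finset_sum_apply]
  simp [Finsupp.single_apply, Finset.sum_ite_eq' s j fun _ => 1]

lemma ex_injective : Function.Injective (ex (n := n)) := by
  intro s t h
  ext j
  have := congrArg (fun g : Fin n →₀ ℕ => g j) h
  simp only [ex_apply] at this
  by_cases hs : j ∈ s <;> by_cases ht : j ∈ t <;> simp [hs, ht] at this ⊢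

lemma monomial_ex (s : Finset (Fin n)) :
    (monomial (ex s) (1 : F)) = ∏ i ∈ s, X i := by
  classical
  induction s using Finset.induction with
  | empty => simp [ex]
  | @insert j t hj ih =>
      rw [Finset.prod_insert hj, ← ih, show ex (insert j t) = Finsupp.single j 1 + ex t by
        rw [ex, Finset.sum_insert hj]; rfl]
      rw [X, monomial_mul, one_mul]

lemma mk_monomial_ex (s : Finset (Fin n)) :
    mkQ F n (monomial (ex s) (1 : F)) = E F s := by
  rw [monomial_ex, map_prod, E]
  exact Finset.prod_congr rfl fun i _ => rfl

/-- Linear lift of a coefficient function to a polynomial. -/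
noncomputable def P (F : Type*) [Field F] (n : ℕ) :
    (Finset (Fin n) → F) →ₗ[F] MvPolynomial (Fin n) F where
  toFun f := ∑ s : Finset (Fin n), monomial (ex s) (f s)
  map_add' f g := by
    rw [← Finset.sum_add_distrib]
    exact Finset.sum_congr rfl fun s _ => by rw [Pi.add_apply, map_add]
  map_smul' c f := by
    simp only [RingHom.id_apply, Finset.smul_sum]
    exact Finset.sum_congr rfl fun s _ => by rw [smul_monomial, Pi.smul_apply, smul_eq_mul]

lemma mk_P (f : Finset (Fin n) → F) : mkQ F n (P F n f) = sig F n f := by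
  show mkQ F n (∑ s : Finset (Fin n), monomial (ex s) (f s)) = ∑ s : Finset (Fin n), f s • E F s
  rw [map_sum]
  refine Finset.sum_congr rfl fun s _ => ?_
  rw [show monomial (ex s) (f s) = f s • monomial (ex s) (1 : F) by
    rw [smul_monomial, smul_eq_mul, mul_one]]
  rw [map_smul, mk_monomial_ex]

/-- The square-free coefficient extractor. -/
noncomputable def cf (p : MvPolynomial (Fin n) F) : Finset (Fin n) → F :=
  fun s => coeff (ex s) p

lemma cf_P (f : Finset (Fin n) → F) : cf (P F n f) = f := by
  funext s
  rw [cf, P]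
  simp only [LinearMap.coe_mk, AddHom.coe_mk]
  rw [coeff_sum]
  rw [Finset.sum_eq_single s (fun t _ ht => by
    rw [coeff_monomial, if_neg (fun h => ht (ex_injective h))])
    (fun hs => absurd (Finset.mem_univ s) hs)]
  rw [coeff_monomial, if_pos rfl]

lemma cf_ker {p : MvPolynomial (Fin n) F} (hp : p ∈ Idl F n) : cf p = 0 := by
  have hrange : (Set.range fun i : Fin n => (X i : MvPolynomial (Fin n) F) ^ 2)
      = (fun d => monomial d (1 : F)) '' Set.range (fun i : Fin n => Finsupp.single i 2) := by
    rw [← Set.range_comp]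
    refine congrArg _ (funext fun i => ?_)
    exact X_pow_eq_monomial
  rw [Idl, hrange] at hp
  have hsupp := mem_ideal_span_monomial_image.mp hp
  funext s
  by_contra h
  have hmem : ex s ∈ p.support := mem_support_iff.mpr h
  obtain ⟨d, ⟨i, rfl⟩, hle⟩ := hsupp _ hmem
  have := (Finsupp.single_le_iff).mp hle
  rw [ex_apply] at this
  by_cases hi : i ∈ s <;> simp [hi] at this

lemma sig_injective : Function.Injective (sig F n) := by
  intro f g h
  rw [← mk_P, ← mk_P] at h
  have hmem : P F n f - P F n g ∈ Idl F n := by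
    rwa [show (mkQ F n (P F n f) = mkQ F n (P F n g))
        ↔ Ideal.Quotient.mk (Idl F n) (P F n f) = Ideal.Quotient.mk (Idl F n) (P F n g)
      from Iff.rfl, Ideal.Quotient.eq] at h
  have hcf := cf_ker hmem
  have : cf (P F n f) = cf (P F n g) := by
    funext s
    have := congrFun hcf s
    simp only [cf, coeff_sub, Pi.zero_apply, sub_eq_zero] at this
    exact this
  rwa [cf_P, cf_P] at this

end SFLef

namespace SFLef


variable {F : Type*} [Field F] {n : ℕ}

/-- The "up" operator on functions on subsets of `Fin n`. -/
noncomputable def Up (F : Type*) [Field F] (n : ℕ) :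
    (Finset (Fin n) → F) →ₗ[F] (Finset (Fin n) → F) where
  toFun f t := ∑ i ∈ t, f (t.erase i)
  map_add' f g := by funext t; simp [Finset.sum_add_distrib]
  map_smul' c f := by funext t; simp [Finset.mul_sum]

/-- The "down" operator. -/
noncomputable def Dn (F : Type*) [Field F] (n : ℕ) :
    (Finset (Fin n) → F) →ₗ[F] (Finset (Fin n) → F) where
  toFun f s := ∑ i ∈ sᶜ, f (insert i s)
  map_add' f g := by funext s; simp [Finset.sum_add_distrib]
  map_smul' c f := by funext s; simp [Finset.mul_sum]

/-- Functions supported on subsets of cardinality `k`. -/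
noncomputable def grade (F : Type*) [Field F] (n k : ℕ) :
    Submodule F (Finset (Fin n) → F) where
  carrier := {f | ∀ s : Finset (Fin n), s.card ≠ k → f s = 0}
  add_mem' := fun hf hg s hs => by simp [hf s hs, hg s hs]
  zero_mem' := fun s _ => rfl
  smul_mem' := fun c f hf s hs => by simp [hf s hs]

lemma mem_grade {k : ℕ} {f : Finset (Fin n) → F} :
    f ∈ grade F n k ↔ ∀ s : Finset (Fin n), s.card ≠ k → f s = 0 := Iff.rfl

lemma up_pow_succ_apply (m : ℕ) (f : Finset (Fin n) → F) :
    (Up F n ^ (m + 1)) f = Up F n ((Up F n ^ m) f) := by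
  rw [pow_succ', Module.End.mul_apply]

lemma up_mem {k : ℕ} {f : Finset (Fin n) → F} (hf : f ∈ grade F n k) :
    Up F n f ∈ grade F n (k + 1) := by
  intro t ht
  refine Finset.sum_eq_zero fun i hi => hf _ ?_
  have h1 : 1 ≤ t.card := Finset.card_pos.mpr ⟨i, hi⟩
  rw [Finset.card_erase_of_mem hi]
  omega

lemma up_pow_mem {k : ℕ} {f : Finset (Fin n) → F} (hf : f ∈ grade F n k) (m : ℕ) :
    (Up F n ^ m) f ∈ grade F n (k + m) := by
  induction m with
  | zero => simpa using hf
  | succ m ih =>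
      rw [up_pow_succ_apply, ← add_assoc]
      exact up_mem ih

lemma dn_mem {k : ℕ} {f : Finset (Fin n) → F} (hf : f ∈ grade F n (k + 1)) :
    Dn F n f ∈ grade F n k := by
  intro s hs
  refine Finset.sum_eq_zero fun i hi => hf _ ?_
  rw [Finset.card_insert_of_notMem (Finset.mem_compl.mp hi)]
  omega

/-- Pointwise commutator identity. -/
lemma comm_pt (f : Finset (Fin n) → F) (s : Finset (Fin n)) :
    Dn F n (Up F n f) s = Up F n (Dn F n f) s + ((sᶜ.card : F) - (s.card : F)) * f s := by
  have hDU : Dn F n (Up F n f) s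
      = ∑ i ∈ sᶜ, (f s + ∑ j ∈ s, f (insert i (s.erase j))) := by
    refine Finset.sum_congr rfl fun i hi => ?_
    have his : i ∉ s := Finset.mem_compl.mp hi
    show ∑ j ∈ insert i s, f ((insert i s).erase j) = _
    rw [Finset.sum_insert his, Finset.erase_insert his]
    congr 1
    refine Finset.sum_congr rfl fun j hj => ?_
    have hij : i ≠ j := fun h => his (h ▸ hj)
    rw [Finset.erase_insert_of_ne hij]
  have hUD : Up F n (Dn F n f) s
      = ∑ j ∈ s, (f s + ∑ i ∈ sᶜ, f (insert i (s.erase j))) := by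
    refine Finset.sum_congr rfl fun j hj => ?_
    show ∑ i ∈ (s.erase j)ᶜ, f (insert i (s.erase j)) = _
    rw [Finset.compl_erase, Finset.sum_insert (by simp [hj]),
      Finset.insert_erase hj]
  rw [hDU, hUD, Finset.sum_add_distrib, Finset.sum_add_distrib, Finset.sum_const,
    Finset.sum_const, Finset.sum_comm]
  simp only [nsmul_eq_mul]
  ring

/-- Graded commutator identity. -/
lemma comm_grade {k : ℕ} {f : Finset (Fin n) → F} (hf : f ∈ grade F n k) :
    Dn F n (Up F n f) = Up F n (Dn F n f) + ((n : F) - 2 * (k : F)) • f := by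
  funext s
  rcases eq_or_ne (f s) 0 with h | h
  · have := comm_pt f s
    simp only [h, mul_zero, add_zero] at this
    simp [this, h]
  · have hc : s.card = k := by_contra fun hc => h (hf s hc)
    have hle : s.card ≤ n := by simpa using Finset.card_le_univ s
    have hcompl : (sᶜ.card : F) = (n : F) - (k : F) := by
      rw [Finset.card_compl, Fintype.card_fin, hc, Nat.cast_sub (hc ▸ hle)]
    have := comm_pt f s
    rw [hcompl, hc] at this
    simp only [Pi.add_apply, Pi.smul_apply, smul_eq_mul]
    rw [this]; ring

lemma comm_pow {k : ℕ} {f : Finset (Fin n) → F} (hf : f ∈ grade F n k) (m : ℕ) :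
    Dn F n ((Up F n ^ (m + 1)) f) = (Up F n ^ (m + 1)) (Dn F n f)
      + (((m : F) + 1) * ((n : F) - 2 * (k : F) - (m : F))) • ((Up F n ^ m) f) := by
  induction m with
  | zero => simpa using comm_grade hf
  | succ m ih =>
      have hmem : (Up F n ^ (m + 1)) f ∈ grade F n (k + (m + 1)) := up_pow_mem hf (m + 1)
      have step := comm_grade hmem
      rw [up_pow_succ_apply (m + 1) f, step, ih, map_add, map_smul,
        ← up_pow_succ_apply (m + 1) (Dn F n f), ← up_pow_succ_apply m f, add_assoc,
        ← add_smul]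
      congr 2
      push_cast
      ring

/-- Descent: once the primitive part vanishes, all powers can be peeled off. -/
lemma descent [CharZero F] {k : ℕ} {f : Finset (Fin n) → F} (hf : f ∈ grade F n k)
    (hD : Dn F n f = 0) (h : (Up F n ^ (n - 2 * k)) f = 0) : f = 0 := by
  have H : ∀ r, r ≤ n - 2 * k → (Up F n ^ (n - 2 * k - r)) f = 0 := by
    intro r
    induction r with
    | zero => intro _; simpa using h
    | succ r ihr =>
        intro hr
        have hprev : (Up F n ^ ((n - 2 * k - (r + 1)) + 1)) f = 0 := by
          have hq : n - 2 * k - r = (n - 2 * k - (r + 1)) + 1 := by omega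
          rw [← hq]; exact ihr (by omega)
        have hcomm := comm_pow hf (n - 2 * k - (r + 1))
        rw [hprev, hD, map_zero, map_zero, zero_add] at hcomm
        have e2 : (n : F) - 2 * (k : F) - ((n - 2 * k - (r + 1) : ℕ) : F)
            = ((n - 2 * k - (n - 2 * k - (r + 1)) : ℕ) : F) := by
          have h1 : n - 2 * k - (n - 2 * k - (r + 1)) = r + 1 := by omega
          rw [h1, Nat.cast_sub (by omega), Nat.cast_sub (by omega : 2 * k ≤ n)]
          push_cast
          ring
        have hc : (((n - 2 * k - (r + 1) : ℕ) : F) + 1)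
            * ((n : F) - 2 * (k : F) - ((n - 2 * k - (r + 1) : ℕ) : F)) ≠ 0 := by
          refine mul_ne_zero ?_ ?_
          · have : (((n - 2 * k - (r + 1)) + 1 : ℕ) : F) ≠ 0 :=
              Nat.cast_ne_zero.mpr (Nat.succ_ne_zero _)
            push_cast at this
            exact this
          · rw [e2]
            exact Nat.cast_ne_zero.mpr (by omega)
        exact (smul_eq_zero.mp hcomm.symm).resolve_left hc
  have := H (n - 2 * k) le_rfl
  simpa using this

/-- The key injectivity lemma. -/
lemma key [CharZero F] : ∀ k : ℕ, 2 * k ≤ n → ∀ f ∈ grade F n k,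
    (Up F n ^ (n - 2 * k)) f = 0 → f = 0 := by
  intro k
  induction k with
  | zero =>
      intro _ f hf h
      have hD : Dn F n f = 0 := by
        funext s
        refine Finset.sum_eq_zero fun i hi => hf _ ?_
        simp [Finset.card_insert_of_notMem (Finset.mem_compl.mp hi)]
      exact descent hf hD h
  | succ k ih =>
      intro hk f hf h
      have hUm1 : (Up F n ^ (n - 2 * (k + 1) + 1)) f = 0 := by
        rw [up_pow_succ_apply, h, map_zero]
      have hcomm := comm_pow hf (n - 2 * (k + 1))
      rw [hUm1, h, smul_zero, add_zero, map_zero] at hcomm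
      have hUD2 : (Up F n ^ (n - 2 * k)) (Dn F n f) = 0 := by
        have e : n - 2 * k = (n - 2 * (k + 1) + 1) + 1 := by omega
        rw [e, up_pow_succ_apply, ← hcomm, map_zero]
      have hD : Dn F n f = 0 := ih (by omega) _ (dn_mem hf) hUD2
      exact descent hf hD h

end SFLef

namespace SFLef

variable {F : Type*} [Field F] {n : ℕ}

lemma sig_grade_eq (k : ℕ) :
    Submodule.map (sig F n) (grade F n k) = sfGrade F n k := by
  classical
  apply le_antisymm
  · rintro _ ⟨f, hf, rfl⟩
    have : sig F n f = ∑ s ∈ Finset.univ.filter (fun s : Finset (Fin n) => s.card = k),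
        f s • E F s := by
      show (∑ s : Finset (Fin n), f s • E F s) = _
      symm
      refine Finset.sum_filter_of_ne fun s _ hne => ?_
      by_contra hc
      exact hne (by rw [hf s hc, zero_smul])
    rw [this]
    refine Submodule.sum_mem _ fun s hs => Submodule.smul_mem _ _ ?_
    refine Submodule.subset_span ⟨s, ?_, rfl⟩
    exact (Finset.mem_filter.mp hs).2
  · rw [sfGrade, Submodule.span_le]
    rintro _ ⟨s, hs, rfl⟩
    have he : sig F n (Pi.single s (1 : F)) = E F s := by
      simp only [sig, LinearMap.coe_mk, AddHom.coe_mk]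
      rw [Finset.sum_eq_single s (fun t _ ht => by rw [Pi.single_eq_of_ne ht, zero_smul])
        (fun hs' => absurd (Finset.mem_univ s) hs')]
      rw [Pi.single_eq_same, one_smul]
    refine ⟨Pi.single s 1, fun t ht => ?_, he⟩
    exact Pi.single_eq_of_ne (fun h => ht (by rw [h]; exact hs)) 1

lemma sig_pow (m : ℕ) (f : Finset (Fin n) → F) :
    (∑ i : Fin n, sfVar i) ^ m * sig F n f = sig F n ((Up F n ^ m) f) := by
  induction m generalizing f with
  | zero => simp
  | succ m ih =>
      have h : (∑ i : Fin n, sfVar i) * sig F n f = sig F n (Up F n f) := sig_up f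
      rw [pow_succ, mul_assoc, h, ih (Up F n f), pow_succ, Module.End.mul_apply]

end SFLef

namespace SFLef

variable {F : Type*} [Field F] {n : ℕ}

/-- Complementation as a linear equivalence of the function space. -/
noncomputable def cE (F : Type*) [Field F] (n : ℕ) :
    (Finset (Fin n) → F) ≃ₗ[F] (Finset (Fin n) → F) where
  toFun f s := f sᶜ
  invFun f s := f sᶜ
  left_inv f := funext fun s => by show f sᶜᶜ = f s; rw [compl_compl]
  right_inv f := funext fun s => by show f sᶜᶜ = f s; rw [compl_compl]
  map_add' f g := rfl
  map_smul' c f := rfl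

lemma map_cE_grade (k : ℕ) (hk : k ≤ n) :
    Submodule.map (cE F n).toLinearMap (grade F n k) = grade F n (n - k) := by
  apply le_antisymm
  · rintro _ ⟨f, hf, rfl⟩ s hs
    show f sᶜ = 0
    refine hf _ fun hc => hs ?_
    have h1 : sᶜ.card = n - s.card := by
      rw [Finset.card_compl, Fintype.card_fin]
    have h2 : s.card ≤ n := by simpa using Finset.card_le_univ s
    omega
  · intro f hf
    refine ⟨fun s => f sᶜ, fun s hs => ?_, funext fun s => ?_⟩
    · refine hf _ fun hc => hs ?_
      have h1 : sᶜ.card = n - s.card := by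
        rw [Finset.card_compl, Fintype.card_fin]
      have h2 : s.card ≤ n := by simpa using Finset.card_le_univ s
      omega
    · show f sᶜᶜ = f s
      rw [compl_compl]

lemma l_mul_grade {k : ℕ} {v : SquareFreeAlgebra F n} (hv : v ∈ sfGrade F n k) :
    (∑ i : Fin n, sfVar i) * v ∈ sfGrade F n (k + 1) := by
  induction hv using Submodule.span_induction with
  | mem x hx =>
      obtain ⟨s, hs, rfl⟩ := hx
      have : (∑ i : Fin n, sfVar i) * (fun s : Finset (Fin n) => ∏ i ∈ s, sfVar i) s
          = ∑ i ∈ sᶜ, E F (insert i s) := l_mul_E s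
      rw [this]
      refine Submodule.sum_mem _ fun i hi => Submodule.subset_span ⟨insert i s, ?_, rfl⟩
      show (insert i s).card = k + 1
      rw [Finset.card_insert_of_notMem (Finset.mem_compl.mp hi), hs]
  | zero => rw [mul_zero]; exact Submodule.zero_mem _
  | add x y hx hy ihx ihy => rw [mul_add]; exact Submodule.add_mem _ ihx ihy
  | smul a x hx ihx => rw [mul_smul_comm]; exact Submodule.smul_mem _ _ ihx

lemma l_pow_mul_grade (m : ℕ) {k : ℕ} {v : SquareFreeAlgebra F n} (hv : v ∈ sfGrade F n k) :
    (∑ i : Fin n, sfVar i) ^ m * v ∈ sfGrade F n (k + m) := by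
  induction m with
  | zero => simpa using hv
  | succ m ih =>
      have : (∑ i : Fin n, sfVar i) ^ (m + 1) * v
          = (∑ i : Fin n, sfVar i) * ((∑ i : Fin n, sfVar i) ^ m * v) := by ring
      rw [this, ← add_assoc]
      exact l_mul_grade ih

end SFLef

/-- Strong Lefschetz for the quadratic monomial complete intersection: with
`l = x_1 + ⋯ + x_n`, the multiplication map `×l^(n-2k) : A_k → A_{n-k}` is bijective
for all `0 ≤ k ≤ ⌊n/2⌋`, i.e. it is realised by a linear equivalence. -/
theorem squarefree_strong_lefschetz {F : Type*} [Field F] [CharZero F] (n : ℕ)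
    (l : SquareFreeAlgebra F n) (hl : l = ∑ i : Fin n, sfVar i) :
    ∀ k : ℕ, 2 * k ≤ n →
      ∃ e : sfGrade F n k ≃ₗ[F] sfGrade F n (n - k),
        ∀ v : sfGrade F n k, (e v : SquareFreeAlgebra F n) = l ^ (n - 2 * k) * v := by

  subst hl
  intro k hk
  have hkn : k ≤ n := by omega
  have hmap : ∀ v ∈ sfGrade F n k,
      (∑ i : Fin n, sfVar i) ^ (n - 2 * k) * v ∈ sfGrade F n (n - k) := by
    intro v hv
    have := SFLef.l_pow_mul_grade (n - 2 * k) hv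
    rwa [show k + (n - 2 * k) = n - k by omega] at this
  let T : sfGrade F n k →ₗ[F] sfGrade F n (n - k) :=
    (Algebra.lmul F (SquareFreeAlgebra F n) ((∑ i : Fin n, (sfVar i : SquareFreeAlgebra F n)) ^ (n - 2 * k))).restrict hmap
  have hinj : Function.Injective T := by
    letI : AddCommGroup (sfGrade F n k) := Submodule.addCommGroup _
    letI : AddCommGroup (sfGrade F n (n - k)) := Submodule.addCommGroup _
    refine (LinearMap.ker_eq_bot (f := T)).mp ?_
    rw [eq_bot_iff]
    rintro ⟨v, hv⟩ hker
    have hT0 : ((∑ i : Fin n, sfVar i) ^ (n - 2 * k)) * v = 0 := by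
      have h0 := LinearMap.mem_ker.mp hker
      have := congrArg (Subtype.val) h0
      simpa [T, LinearMap.restrict_apply] using this
    obtain ⟨f, hf, rfl⟩ : ∃ f ∈ SFLef.grade F n k, SFLef.sig F n f = v := by
      rw [← SFLef.sig_grade_eq k] at hv
      exact hv
    have hsig0 : SFLef.sig F n ((SFLef.Up F n ^ (n - 2 * k)) f) = 0 := by
      rw [← SFLef.sig_pow]; exact hT0
    have hf0 : f = 0 := by
      refine SFLef.key k hk f hf ?_
      apply SFLef.sig_injective
      rw [hsig0, map_zero]
    simp only [Submodule.mem_bot]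
    exact Subtype.ext (by show SFLef.sig F n f = 0; rw [hf0, map_zero])
  let e1 : SFLef.grade F n k ≃ₗ[F] sfGrade F n k :=
    (Submodule.equivMapOfInjective (SFLef.sig F n) SFLef.sig_injective
      (SFLef.grade F n k)).trans (LinearEquiv.ofEq _ _ (SFLef.sig_grade_eq k))
  let e2 : SFLef.grade F n (n - k) ≃ₗ[F] sfGrade F n (n - k) :=
    (Submodule.equivMapOfInjective (SFLef.sig F n) SFLef.sig_injective
      (SFLef.grade F n (n - k))).trans (LinearEquiv.ofEq _ _ (SFLef.sig_grade_eq (n - k)))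
  let e3 : SFLef.grade F n k ≃ₗ[F] SFLef.grade F n (n - k) :=
    ((SFLef.cE F n).submoduleMap (SFLef.grade F n k)).trans
      (LinearEquiv.ofEq _ _ (SFLef.map_cE_grade k hkn))
  letI : AddCommGroup (sfGrade F n k) := Submodule.addCommGroup _
  letI : AddCommGroup (sfGrade F n (n - k)) := Submodule.addCommGroup _
  haveI : FiniteDimensional F (sfGrade F n k) := Module.Finite.equiv e1
  haveI : FiniteDimensional F (sfGrade F n (n - k)) := Module.Finite.equiv e2
  have hrank : Module.finrank F (sfGrade F n k) = Module.finrank F (sfGrade F n (n - k)) :=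
    (e1.symm.trans (e3.trans e2)).finrank_eq
  refine ⟨T.linearEquivOfInjective hinj hrank, fun v => ?_⟩
  rw [LinearMap.linearEquivOfInjective_apply]
  rfl
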